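/- Let γ > 0 and V_r < θ < β be real numbers, v(t) = (V_r − β)e^{−γt} + β, δ ∈ (0, min(β − θ, θ − V_r)), and let t1 = (1/γ)·log((β − V_r)/(β − θ + δ)) and t2 = (1/γ)·log((β − V_r)/(β − θ − δ)). Let f : [0, t2] → ℝ be continuous with |f(t) − v(t)| < δ for all t ∈ [0, t2]. Then the set {t ∈ [0, t2] : f(t) ≥ θ} is nonempty, its infimum τ satisfies t1 < τ ≤ t2, and f(t) > θ − 2δ for every t ∈ [t1, t2]. -/
import Mathlib


/-- If `f` is continuous on `[0, t₂]` and stays within `δ` of the deterministic LIF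
solution `v(t) = (V_r - β) e^{-γ t} + β`, then `f` reaches the threshold `θ` in `[0, t₂]`,
the first time `τ` it does so satisfies `t₁ < τ ≤ t₂`, and `f(t) > θ - 2δ` for every
`t ∈ [t₁, t₂]`. -/
theorem hitting_time_in_tube (γ Vr θ β δ : ℝ) (hγ : 0 < γ) (h1 : Vr < θ) (h2 : θ < β)
    (hδ : 0 < δ) (hδ' : δ < min (β - θ) (θ - Vr))
    (t1 t2 : ℝ)
    (ht1 : t1 = (1 / γ) * Real.log ((β - Vr) / (β - θ + δ)))
    (ht2 : t2 = (1 / γ) * Real.log ((β - Vr) / (β - θ - δ)))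
    (f : ℝ → ℝ) (hf : ContinuousOn f (Set.Icc 0 t2))
    (htube : ∀ t ∈ Set.Icc 0 t2, |f t - ((Vr - β) * Real.exp (-γ * t) + β)| < δ) :
    {t ∈ Set.Icc 0 t2 | θ ≤ f t}.Nonempty ∧
    t1 < sInf {t ∈ Set.Icc 0 t2 | θ ≤ f t} ∧
    sInf {t ∈ Set.Icc 0 t2 | θ ≤ f t} ≤ t2 ∧
    ∀ t ∈ Set.Icc t1 t2, θ - 2 * δ < f t := by
  have hδ1 : δ < β - θ := lt_of_lt_of_le hδ' (min_le_left _ _)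
  have hδ2 : δ < θ - Vr := lt_of_lt_of_le hδ' (min_le_right _ _)
  have hA : (0:ℝ) < β - θ + δ := by linarith
  have hB : (0:ℝ) < β - θ - δ := by linarith
  have hV : (0:ℝ) < β - Vr := by linarith
  have hγ' : γ ≠ 0 := ne_of_gt hγ
  -- value of v at t1
  have hexp1 : Real.exp (-γ * t1) = (β - θ + δ) / (β - Vr) := by
    rw [ht1]
    have h : -γ * (1 / γ * Real.log ((β - Vr) / (β - θ + δ)))
        = Real.log ((β - θ + δ) / (β - Vr)) := by
      rw [Real.log_div (ne_of_gt hV) (ne_of_gt hA),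
        Real.log_div (ne_of_gt hA) (ne_of_gt hV)]
      field_simp
      ring
    rw [h, Real.exp_log (by positivity)]
  have hexp2 : Real.exp (-γ * t2) = (β - θ - δ) / (β - Vr) := by
    rw [ht2]
    have h : -γ * (1 / γ * Real.log ((β - Vr) / (β - θ - δ)))
        = Real.log ((β - θ - δ) / (β - Vr)) := by
      rw [Real.log_div (ne_of_gt hV) (ne_of_gt hB),
        Real.log_div (ne_of_gt hB) (ne_of_gt hV)]
      field_simp
      ring
    rw [h, Real.exp_log (by positivity)]
  have hv1 : (Vr - β) * Real.exp (-γ * t1) + β = θ - δ := by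
    rw [hexp1]; field_simp; ring
  have hv2 : (Vr - β) * Real.exp (-γ * t2) + β = θ + δ := by
    rw [hexp2]; field_simp; ring
  have ht1pos : 0 < t1 := by
    rw [ht1]
    have : (1:ℝ) < (β - Vr) / (β - θ + δ) := by
      rw [lt_div_iff₀ hA]; linarith
    have := Real.log_pos this
    positivity
  have ht12 : t1 < t2 := by
    rw [ht1, ht2]
    have hlt : (β - Vr) / (β - θ + δ) < (β - Vr) / (β - θ - δ) := by
      apply div_lt_div_of_pos_left hV hB; linarith
    have := Real.log_lt_log (by positivity) hlt
    have h1γ : 0 < 1 / γ := by positivity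
    exact mul_lt_mul_of_pos_left this h1γ
  have ht2pos : 0 < t2 := lt_trans ht1pos ht12
  -- monotonicity of v
  have hmono : ∀ s t : ℝ, s ≤ t →
      (Vr - β) * Real.exp (-γ * s) + β ≤ (Vr - β) * Real.exp (-γ * t) + β := by
    intro s t hst
    have he : Real.exp (-γ * t) ≤ Real.exp (-γ * s) := by
      apply Real.exp_le_exp.mpr; nlinarith
    nlinarith
  -- t2 is in the set
  have ht2mem : t2 ∈ Set.Icc (0:ℝ) t2 := ⟨le_of_lt ht2pos, le_refl _⟩
  have hft2 : θ ≤ f t2 := by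
    have := htube t2 ht2mem
    rw [hv2] at this
    have := abs_lt.mp this
    linarith [this.1]
  have hne : {t ∈ Set.Icc 0 t2 | θ ≤ f t}.Nonempty := ⟨t2, ht2mem, hft2⟩
  -- the set is closed
  have hclosed : IsClosed {t ∈ Set.Icc 0 t2 | θ ≤ f t} := by
    have : {t ∈ Set.Icc 0 t2 | θ ≤ f t} = Set.Icc 0 t2 ∩ f ⁻¹' Set.Ici θ := by
      ext x; simp [Set.mem_preimage, Set.mem_Ici]
    rw [this]
    exact hf.preimage_isClosed_of_isClosed isClosed_Icc isClosed_Ici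
  have hbdd : BddBelow {t ∈ Set.Icc 0 t2 | θ ≤ f t} :=
    ⟨0, fun x hx => hx.1.1⟩
  have hinf_mem : sInf {t ∈ Set.Icc 0 t2 | θ ≤ f t} ∈ {t ∈ Set.Icc 0 t2 | θ ≤ f t} :=
    hclosed.csInf_mem hne hbdd
  set τ := sInf {t ∈ Set.Icc 0 t2 | θ ≤ f t} with hτ
  have hτmem : τ ∈ Set.Icc (0:ℝ) t2 := hinf_mem.1
  have hfτ : θ ≤ f τ := hinf_mem.2
  refine ⟨hne, ?_, hτmem.2, ?_⟩
  · by_contra hcon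
    push_neg at hcon
    have hvτ : (Vr - β) * Real.exp (-γ * τ) + β ≤ θ - δ := by
      have := hmono τ t1 hcon
      linarith [this, hv1.le]
    have := htube τ hτmem
    have := abs_lt.mp this
    linarith [this.2]
  · intro t ht
    have htmem : t ∈ Set.Icc (0:ℝ) t2 := ⟨le_trans (le_of_lt ht1pos) ht.1, ht.2⟩
    have hvt : θ - δ ≤ (Vr - β) * Real.exp (-γ * t) + β := by
      have := hmono t1 t ht.1
      linarith [hv1.ge]
    have := htube t htmem
    have := abs_lt.mp this
    linarith [this.1]
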